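/- Let $\pi$ be a coupling of compactly supported $\mu_0 \in \mathcal{P}(\mathbb{R}^{d_0})$, $\mu_1 \in \mathcal{P}(\mathbb{R}^{d_1})$ and let $\pi_\ell$ be its block approximation at scale $\ell > 0$. Then the KL divergence of $\pi_\ell$ with respect to $\mu_0\otimes\mu_1$ satisfies $\mathsf{D}_{\mathsf{KL}}(\pi_\ell \| \mu_0\otimes\mu_1) \le -\sum_{q\in\mathbb{Z}^{d_0}} \mu_0(H_{0,q,\ell})\log\mu_0(H_{0,q,\ell}) - \sum_{q'\in\mathbb{Z}^{d_1}} \mu_1(H_{1,q',\ell})\log\mu_1(H_{1,q',\ell})$, i.e., it is bounded by the sum of the Shannon entropies of the discretized marginals. -/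

import Mathlib

open MeasureTheory ENNReal

/-- The half-open hypercube of side `ℓ` indexed by `q ∈ ℤ^d`. -/
def gridCube {d : ℕ} (ℓ : ℝ) (q : Fin d → ℤ) : Set (EuclideanSpace ℝ (Fin d)) :=
  {x | ∀ m, (q m : ℝ) * ℓ ≤ x m ∧ x m < ((q m : ℝ) + 1) * ℓ}

/-- The block approximation of a coupling `π` of `(μ0, μ1)` at scale `ℓ` (with `0/0 = 0`). -/
noncomputable def blockApprox {d0 d1 : ℕ}
    (μ0 : Measure (EuclideanSpace ℝ (Fin d0))) (μ1 : Measure (EuclideanSpace ℝ (Fin d1)))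
    (π : Measure (EuclideanSpace ℝ (Fin d0) × EuclideanSpace ℝ (Fin d1))) (ℓ : ℝ) :
    Measure (EuclideanSpace ℝ (Fin d0) × EuclideanSpace ℝ (Fin d1)) :=
  Measure.sum fun qq : (Fin d0 → ℤ) × (Fin d1 → ℤ) =>
    (π (gridCube ℓ qq.1 ×ˢ gridCube ℓ qq.2) / (μ0 (gridCube ℓ qq.1) * μ1 (gridCube ℓ qq.2)))
      • ((μ0.restrict (gridCube ℓ qq.1)).prod (μ1.restrict (gridCube ℓ qq.2)))

open Classical in
/-- Kullback–Leibler divergence `D_KL(ν‖μ)`, `+∞` unless `ν ≪ μ` with integrable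
log-likelihood ratio. -/
noncomputable def klDiv {α : Type*} [MeasurableSpace α] (ν μ : Measure α) : ℝ≥0∞ :=
  if ν ≪ μ ∧ Integrable (llr ν μ) ν then ENNReal.ofReal (∫ x, llr ν μ x ∂ν) else ⊤

noncomputable def cubeIdx (ℓ : ℝ) {d : ℕ} (x : EuclideanSpace ℝ (Fin d)) : Fin d → ℤ :=
  fun m => ⌊x m / ℓ⌋

variable {d : ℕ} {ℓ : ℝ}

lemma mem_gridCube_iff (hℓ : 0 < ℓ) (x : EuclideanSpace ℝ (Fin d))
    (q : Fin d → ℤ) : x ∈ gridCube ℓ q ↔ cubeIdx ℓ x = q := by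
  simp only [gridCube, Set.mem_setOf_eq, cubeIdx, funext_iff]
  refine forall_congr' fun m => ?_
  rw [Int.floor_eq_iff]
  constructor
  · rintro ⟨h1, h2⟩
    exact ⟨(le_div_iff₀ hℓ).mpr h1, (div_lt_iff₀ hℓ).mpr h2⟩
  · rintro ⟨h1, h2⟩
    exact ⟨(le_div_iff₀ hℓ).mp h1, (div_lt_iff₀ hℓ).mp h2⟩

lemma mem_own_gridCube (hℓ : 0 < ℓ) (x : EuclideanSpace ℝ (Fin d)) :
    x ∈ gridCube ℓ (cubeIdx ℓ x) := (mem_gridCube_iff hℓ x _).mpr rfl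

lemma gridCube_disjoint (hℓ : 0 < ℓ) :
    Pairwise (Function.onFun Disjoint fun q : Fin d → ℤ => gridCube ℓ q) := by
  intro q q' hqq
  refine Set.disjoint_left.mpr fun x hx hx' => hqq ?_
  rw [mem_gridCube_iff hℓ] at hx hx'
  rw [← hx, hx']

lemma iUnion_gridCube (hℓ : 0 < ℓ) : (⋃ q : Fin d → ℤ, gridCube ℓ q) = Set.univ :=
  Set.eq_univ_of_forall fun x => Set.mem_iUnion.mpr ⟨_, mem_own_gridCube hℓ x⟩

lemma measurable_eval (m : Fin d) :
    Measurable (fun x : EuclideanSpace ℝ (Fin d) => x m) :=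
    (measurable_pi_apply m).comp (WithLp.measurable_ofLp 2 _)

lemma measurableSet_gridCube (ℓ : ℝ) (q : Fin d → ℤ) :
    MeasurableSet (gridCube ℓ q) := by
  have : gridCube ℓ q = ⋂ m, (fun x : EuclideanSpace ℝ (Fin d) => x m) ⁻¹'
      (Set.Ico ((q m : ℝ) * ℓ) (((q m : ℝ) + 1) * ℓ)) := by
    ext x; simp [gridCube, Set.mem_Ico]
  rw [this]
  exact MeasurableSet.iInter fun m => (measurable_eval m) measurableSet_Ico

lemma measurable_cubeIdx : Measurable (cubeIdx ℓ (d := d)) :=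
  measurable_pi_lambda _ fun m => Measurable.floor ((measurable_eval m).div_const ℓ)

/-- Finiteness of the set of cubes with positive mass, for compactly supported `μ`. -/
lemma finite_pos_cubes (hℓ : 0 < ℓ) (μ : Measure (EuclideanSpace ℝ (Fin d)))
    (hc : ∃ K, IsCompact K ∧ μ Kᶜ = 0) :
    {q : Fin d → ℤ | μ (gridCube ℓ q) ≠ 0}.Finite := by
  obtain ⟨K, hK, hKnull⟩ := hc
  have hsub : {q : Fin d → ℤ | μ (gridCube ℓ q) ≠ 0} ⊆ cubeIdx ℓ '' K := by
    intro q hq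
    have : (gridCube ℓ q ∩ K).Nonempty := by
      by_contra h
      rw [Set.not_nonempty_iff_eq_empty, ← Set.disjoint_iff_inter_eq_empty] at h
      exact hq (measure_mono_null h.subset_compl_right hKnull)
    obtain ⟨x, hxq, hxK⟩ := this
    exact ⟨x, hxK, ((mem_gridCube_iff hℓ x q).mp hxq)⟩
  refine Set.Finite.subset ?_ hsub
  obtain ⟨R, hR⟩ := hK.isBounded.subset_closedBall 0
  refine Set.Finite.subset (Set.Finite.pi (t := fun _ : Fin d =>
    Set.Icc ⌊(-R) / ℓ⌋ ⌊R / ℓ⌋) fun _ => Set.finite_Icc _ _) ?_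
  rintro q ⟨x, hxK, rfl⟩
  have hx : ∀ m, |x m| ≤ R := by
    intro m
    have h1 : ‖x‖ ≤ R := by simpa [Metric.mem_closedBall] using hR hxK
    refine le_trans ?_ h1
    rw [EuclideanSpace.norm_eq, ← Real.sqrt_sq_eq_abs]
    apply Real.sqrt_le_sqrt
    calc (x m)^2 = ‖x m‖^2 := by rw [Real.norm_eq_abs, sq_abs]
      _ ≤ ∑ i, ‖x i‖^2 :=
        Finset.single_le_sum (f := fun i => ‖x i‖^2) (fun i _ => by positivity)
          (Finset.mem_univ m)
  intro m _
  have h1 : -R ≤ x m := (abs_le.mp (hx m)).1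
  have h2 : x m ≤ R := (abs_le.mp (hx m)).2
  simp only [cubeIdx, Set.mem_Icc]
  exact ⟨Int.floor_le_floor (by gcongr), Int.floor_le_floor (by gcongr)⟩

lemma inner_sum_eq {ι : Type*} [Countable ι] (a m : ℝ≥0∞) (b p : ι → ℝ≥0∞)
    (ha : a ≠ ∞) (hbt : ∀ i, b i ≠ ∞) (hpb : ∀ i, p i ≤ b i)
    (hsum : ∑' i, p i = a) (hm : m ≤ a) :
    ∑' i, p i / (a * b i) * (m * b i) = m := by
  rcases eq_or_ne a 0 with ha0 | ha0
  · have hm0 : m = 0 := le_antisymm (ha0 ▸ hm) (zero_le)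
    simp [hm0]
  · have key : ∀ i, p i / (a * b i) * (m * b i) = m * (p i * a⁻¹) := by
      intro i
      rcases eq_or_ne (b i) 0 with hb | hb
      · have hp0 : p i = 0 := le_antisymm (hb ▸ hpb i) (zero_le)
        simp [hp0, hb]
      · calc p i / (a * b i) * (m * b i)
            = m * (p i * a⁻¹) * ((b i)⁻¹ * b i) := by
              rw [div_eq_mul_inv, ENNReal.mul_inv (Or.inl ha0) (Or.inl ha)]; ring
          _ = m * (p i * a⁻¹) := by rw [ENNReal.inv_mul_cancel hb (hbt i), mul_one]
    rw [tsum_congr key, ENNReal.tsum_mul_left, ENNReal.tsum_mul_right, hsum,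
      ENNReal.mul_inv_cancel ha0 ha, mul_one]

section Main

variable {d0 d1 : ℕ}
  (μ0 : Measure (EuclideanSpace ℝ (Fin d0))) (μ1 : Measure (EuclideanSpace ℝ (Fin d1)))
  (π : Measure (EuclideanSpace ℝ (Fin d0) × EuclideanSpace ℝ (Fin d1))) (ℓ : ℝ)

/-- The coefficient of the block approximation. -/
noncomputable def bCoef (qq : (Fin d0 → ℤ) × (Fin d1 → ℤ)) : ℝ≥0∞ :=
  π (gridCube ℓ qq.1 ×ˢ gridCube ℓ qq.2) / (μ0 (gridCube ℓ qq.1) * μ1 (gridCube ℓ qq.2))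

/-- The density of the block approximation. -/
noncomputable def bDens : EuclideanSpace ℝ (Fin d0) × EuclideanSpace ℝ (Fin d1) → ℝ≥0∞ :=
  ∑' qq : (Fin d0 → ℤ) × (Fin d1 → ℤ),
    (gridCube ℓ qq.1 ×ˢ gridCube ℓ qq.2).indicator (fun _ => bCoef μ0 μ1 π ℓ qq)


lemma measurable_bDens_summand (qq : (Fin d0 → ℤ) × (Fin d1 → ℤ)) :
    Measurable ((gridCube ℓ qq.1 ×ˢ gridCube ℓ qq.2).indicator
      (fun _ => bCoef μ0 μ1 π ℓ qq)) :=
  measurable_const.indicator ((measurableSet_gridCube ℓ qq.1).prod (measurableSet_gridCube ℓ qq.2))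

lemma measurable_bDens : Measurable (bDens μ0 μ1 π ℓ) := by
  have : bDens μ0 μ1 π ℓ = fun p => ∑' qq : (Fin d0 → ℤ) × (Fin d1 → ℤ),
      (gridCube ℓ qq.1 ×ˢ gridCube ℓ qq.2).indicator (fun _ => bCoef μ0 μ1 π ℓ qq) p := by
    ext p
    exact tsum_apply (Pi.summable.2 fun _ => ENNReal.summable)
  rw [this]
  exact Measurable.ennreal_tsum fun qq => measurable_bDens_summand μ0 μ1 π ℓ qq

variable [SFinite μ0] [SFinite μ1]

lemma blockApprox_eq_withDensity :
    blockApprox μ0 μ1 π ℓ = (μ0.prod μ1).withDensity (bDens μ0 μ1 π ℓ) := by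
  rw [bDens, withDensity_tsum (fun qq => measurable_bDens_summand μ0 μ1 π ℓ qq), blockApprox]
  congr 1
  ext qq : 1
  rw [withDensity_indicator
    ((measurableSet_gridCube ℓ qq.1).prod (measurableSet_gridCube ℓ qq.2)),
    withDensity_const, ← Measure.prod_restrict]
  rfl

lemma bDens_apply (hℓ : 0 < ℓ) (p : EuclideanSpace ℝ (Fin d0) × EuclideanSpace ℝ (Fin d1)) :
    bDens μ0 μ1 π ℓ p = bCoef μ0 μ1 π ℓ (cubeIdx ℓ p.1, cubeIdx ℓ p.2) := by
  rw [bDens, tsum_apply (Pi.summable.2 fun _ => ENNReal.summable)]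
  rw [tsum_eq_single (cubeIdx ℓ p.1, cubeIdx ℓ p.2)]
  · rw [Set.indicator_of_mem]
    exact ⟨mem_own_gridCube hℓ _, mem_own_gridCube hℓ _⟩
  · intro qq hqq
    rw [Set.indicator_of_notMem]
    rintro ⟨h1, h2⟩
    exact hqq (Prod.ext ((mem_gridCube_iff hℓ _ _).mp h1).symm
      ((mem_gridCube_iff hℓ _ _).mp h2).symm)


variable [IsProbabilityMeasure μ0] [IsProbabilityMeasure μ1] [IsProbabilityMeasure π]

lemma pi_le_mu1 (hπ1 : π.map Prod.snd = μ1) (A : Set (EuclideanSpace ℝ (Fin d0)))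
    (q' : Fin d1 → ℤ) : π (A ×ˢ gridCube ℓ q') ≤ μ1 (gridCube ℓ q') := by
  rw [← hπ1, Measure.map_apply measurable_snd (measurableSet_gridCube ℓ q')]
  exact measure_mono fun p hp => hp.2

lemma pi_le_mu0 (hπ0 : π.map Prod.fst = μ0) (q : Fin d0 → ℤ)
    (B : Set (EuclideanSpace ℝ (Fin d1))) : π (gridCube ℓ q ×ˢ B) ≤ μ0 (gridCube ℓ q) := by
  rw [← hπ0, Measure.map_apply measurable_fst (measurableSet_gridCube ℓ q)]
  exact measure_mono fun p hp => hp.1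

lemma sum_pi_cubes_fst (hπ0 : π.map Prod.fst = μ0) (hℓ : 0 < ℓ) (q : Fin d0 → ℤ) :
    ∑' q' : Fin d1 → ℤ, π (gridCube ℓ q ×ˢ gridCube ℓ q') = μ0 (gridCube ℓ q) := by
  rw [← measure_iUnion (fun a b hab => by
      rw [Function.onFun, Set.disjoint_iff_inter_eq_empty, Set.prod_inter_prod,
        Set.disjoint_iff_inter_eq_empty.mp ((gridCube_disjoint hℓ hab)), Set.prod_empty])
    (fun q' => (measurableSet_gridCube ℓ q).prod (measurableSet_gridCube ℓ q')),
    ← Set.prod_iUnion, iUnion_gridCube hℓ, ← hπ0,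
    Measure.map_apply measurable_fst (measurableSet_gridCube ℓ q)]
  congr 1
  ext p
  simp [Set.mem_prod]

lemma sum_pi_cubes_snd (hπ1 : π.map Prod.snd = μ1) (hℓ : 0 < ℓ) (q' : Fin d1 → ℤ) :
    ∑' q : Fin d0 → ℤ, π (gridCube ℓ q ×ˢ gridCube ℓ q') = μ1 (gridCube ℓ q') := by
  rw [← measure_iUnion (fun a b hab => by
      rw [Function.onFun, Set.disjoint_iff_inter_eq_empty, Set.prod_inter_prod,
        Set.disjoint_iff_inter_eq_empty.mp ((gridCube_disjoint hℓ hab)), Set.empty_prod])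
    (fun q => (measurableSet_gridCube ℓ q).prod (measurableSet_gridCube ℓ q')),
    ← Set.iUnion_prod_const, iUnion_gridCube hℓ, ← hπ1,
    Measure.map_apply measurable_snd (measurableSet_gridCube ℓ q')]
  congr 1
  ext p
  simp [Set.mem_prod]

lemma map_fst_blockApprox (hπ0 : π.map Prod.fst = μ0) (hπ1 : π.map Prod.snd = μ1)
    (hℓ : 0 < ℓ) : (blockApprox μ0 μ1 π ℓ).map Prod.fst = μ0 := by
  ext s hs
  rw [Measure.map_apply measurable_fst hs, blockApprox,
    Measure.sum_apply _ (measurable_fst hs)]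
  have hpre : (Prod.fst ⁻¹' s : Set (EuclideanSpace ℝ (Fin d0) × EuclideanSpace ℝ (Fin d1)))
      = s ×ˢ Set.univ := by ext p; simp [Set.mem_prod]
  have hterm : ∀ qq : (Fin d0 → ℤ) × (Fin d1 → ℤ),
      ((π (gridCube ℓ qq.1 ×ˢ gridCube ℓ qq.2) / (μ0 (gridCube ℓ qq.1) * μ1 (gridCube ℓ qq.2)))
        • ((μ0.restrict (gridCube ℓ qq.1)).prod (μ1.restrict (gridCube ℓ qq.2))))
        (Prod.fst ⁻¹' s)
      = π (gridCube ℓ qq.1 ×ˢ gridCube ℓ qq.2) / (μ0 (gridCube ℓ qq.1) * μ1 (gridCube ℓ qq.2))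
        * (μ0 (s ∩ gridCube ℓ qq.1) * μ1 (gridCube ℓ qq.2)) := by
    intro qq
    rw [Measure.smul_apply, smul_eq_mul, hpre, Measure.prod_prod,
      Measure.restrict_apply hs, Measure.restrict_apply_univ]
  rw [tsum_congr hterm, ENNReal.tsum_prod (f := fun q q' =>
    π (gridCube ℓ q ×ˢ gridCube ℓ q') / (μ0 (gridCube ℓ q) * μ1 (gridCube ℓ q'))
      * (μ0 (s ∩ gridCube ℓ q) * μ1 (gridCube ℓ q')))]
  have hinner : ∀ q : Fin d0 → ℤ,
      ∑' q' : Fin d1 → ℤ,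
        π (gridCube ℓ q ×ˢ gridCube ℓ q') / (μ0 (gridCube ℓ q) * μ1 (gridCube ℓ q'))
          * (μ0 (s ∩ gridCube ℓ q) * μ1 (gridCube ℓ q'))
      = μ0 (s ∩ gridCube ℓ q) := by
    intro q
    exact inner_sum_eq (μ0 (gridCube ℓ q)) (μ0 (s ∩ gridCube ℓ q))
      (fun q' => μ1 (gridCube ℓ q')) (fun q' => π (gridCube ℓ q ×ˢ gridCube ℓ q'))
      (measure_ne_top _ _) (fun q' => measure_ne_top _ _)
      (fun q' => pi_le_mu1 μ1 π ℓ hπ1 _ q') (sum_pi_cubes_fst μ0 π ℓ hπ0 hℓ q)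
      (measure_mono Set.inter_subset_right)
  rw [tsum_congr hinner, ← measure_iUnion (fun a b hab =>
      ((gridCube_disjoint hℓ hab).mono Set.inter_subset_right Set.inter_subset_right))
    (fun q => hs.inter (measurableSet_gridCube ℓ q)), ← Set.inter_iUnion,
    iUnion_gridCube hℓ, Set.inter_univ]

lemma map_snd_blockApprox (hπ0 : π.map Prod.fst = μ0) (hπ1 : π.map Prod.snd = μ1)
    (hℓ : 0 < ℓ) : (blockApprox μ0 μ1 π ℓ).map Prod.snd = μ1 := by
  ext s hs
  rw [Measure.map_apply measurable_snd hs, blockApprox,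
    Measure.sum_apply _ (measurable_snd hs)]
  have hpre : (Prod.snd ⁻¹' s : Set (EuclideanSpace ℝ (Fin d0) × EuclideanSpace ℝ (Fin d1)))
      = Set.univ ×ˢ s := by ext p; simp [Set.mem_prod]
  have hterm : ∀ qq : (Fin d0 → ℤ) × (Fin d1 → ℤ),
      ((π (gridCube ℓ qq.1 ×ˢ gridCube ℓ qq.2) / (μ0 (gridCube ℓ qq.1) * μ1 (gridCube ℓ qq.2)))
        • ((μ0.restrict (gridCube ℓ qq.1)).prod (μ1.restrict (gridCube ℓ qq.2))))
        (Prod.snd ⁻¹' s)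
      = π (gridCube ℓ qq.1 ×ˢ gridCube ℓ qq.2)
          / (μ1 (gridCube ℓ qq.2) * μ0 (gridCube ℓ qq.1))
        * (μ1 (s ∩ gridCube ℓ qq.2) * μ0 (gridCube ℓ qq.1)) := by
    intro qq
    rw [Measure.smul_apply, smul_eq_mul, hpre, Measure.prod_prod,
      Measure.restrict_apply hs, Measure.restrict_apply_univ,
      mul_comm (μ0 (gridCube ℓ qq.1)) (μ1 (gridCube ℓ qq.2)),
      mul_comm (μ0 (gridCube ℓ qq.1)) (μ1 (s ∩ gridCube ℓ qq.2))]
  rw [tsum_congr hterm, ENNReal.tsum_prod (f := fun q q' =>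
    π (gridCube ℓ q ×ˢ gridCube ℓ q') / (μ1 (gridCube ℓ q') * μ0 (gridCube ℓ q))
      * (μ1 (s ∩ gridCube ℓ q') * μ0 (gridCube ℓ q))), ENNReal.tsum_comm]
  have hinner : ∀ q' : Fin d1 → ℤ,
      ∑' q : Fin d0 → ℤ,
        π (gridCube ℓ q ×ˢ gridCube ℓ q') / (μ1 (gridCube ℓ q') * μ0 (gridCube ℓ q))
          * (μ1 (s ∩ gridCube ℓ q') * μ0 (gridCube ℓ q))
      = μ1 (s ∩ gridCube ℓ q') := by
    intro q'
    exact inner_sum_eq (μ1 (gridCube ℓ q')) (μ1 (s ∩ gridCube ℓ q'))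
      (fun q => μ0 (gridCube ℓ q)) (fun q => π (gridCube ℓ q ×ˢ gridCube ℓ q'))
      (measure_ne_top _ _) (fun q => measure_ne_top _ _)
      (fun q => pi_le_mu0 μ0 π ℓ hπ0 q _) (sum_pi_cubes_snd μ1 π ℓ hπ1 hℓ q')
      (measure_mono Set.inter_subset_right)
  rw [tsum_congr hinner, ← measure_iUnion (fun a b hab =>
      ((gridCube_disjoint hℓ hab).mono Set.inter_subset_right Set.inter_subset_right))
    (fun q => hs.inter (measurableSet_gridCube ℓ q)), ← Set.inter_iUnion,
    iUnion_gridCube hℓ, Set.inter_univ]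


lemma bad_summand_zero (qq : (Fin d0 → ℤ) × (Fin d1 → ℤ))
    (h : μ0 (gridCube ℓ qq.1) = 0 ∨ μ1 (gridCube ℓ qq.2) = 0
      ∨ π (gridCube ℓ qq.1 ×ˢ gridCube ℓ qq.2) = 0) :
    (π (gridCube ℓ qq.1 ×ˢ gridCube ℓ qq.2) / (μ0 (gridCube ℓ qq.1) * μ1 (gridCube ℓ qq.2)))
      • ((μ0.restrict (gridCube ℓ qq.1)).prod (μ1.restrict (gridCube ℓ qq.2))) = 0 := by
  rcases h with h | h | h
  · rw [Measure.restrict_eq_zero.mpr h, Measure.zero_prod, smul_zero]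
  · rw [Measure.restrict_eq_zero.mpr h, Measure.prod_zero, smul_zero]
  · rw [h, ENNReal.zero_div, zero_smul]

lemma ae_good (hℓ : 0 < ℓ) : ∀ᵐ p ∂(blockApprox μ0 μ1 π ℓ),
    μ0 (gridCube ℓ (cubeIdx ℓ p.1)) ≠ 0 ∧ μ1 (gridCube ℓ (cubeIdx ℓ p.2)) ≠ 0 ∧
    π (gridCube ℓ (cubeIdx ℓ p.1) ×ˢ gridCube ℓ (cubeIdx ℓ p.2)) ≠ 0 := by
  set Bad : Set ((Fin d0 → ℤ) × (Fin d1 → ℤ)) :=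
    {qq | μ0 (gridCube ℓ qq.1) = 0 ∨ μ1 (gridCube ℓ qq.2) = 0
      ∨ π (gridCube ℓ qq.1 ×ˢ gridCube ℓ qq.2) = 0} with hBad
  set U : Set (EuclideanSpace ℝ (Fin d0) × EuclideanSpace ℝ (Fin d1)) :=
    ⋃ qq ∈ Bad, gridCube ℓ qq.1 ×ˢ gridCube ℓ qq.2 with hU
  have hUmeas : MeasurableSet U :=
    MeasurableSet.biUnion (Set.to_countable _) fun qq _ =>
      (measurableSet_gridCube ℓ qq.1).prod (measurableSet_gridCube ℓ qq.2)
  have hUnull : blockApprox μ0 μ1 π ℓ U = 0 := by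
    rw [blockApprox, Measure.sum_apply _ hUmeas]
    refine ENNReal.tsum_eq_zero.mpr fun qq => ?_
    by_cases hqq : qq ∈ Bad
    · rw [bad_summand_zero μ0 μ1 π ℓ qq hqq]; rfl
    · rw [Measure.smul_apply, smul_eq_mul]
      have : ((μ0.restrict (gridCube ℓ qq.1)).prod (μ1.restrict (gridCube ℓ qq.2))) U = 0 := by
        rw [hU, measure_biUnion_null_iff (Set.to_countable _)]
        intro b hb
        have hne : b ≠ qq := fun h => hqq (h ▸ hb)
        rw [Measure.prod_prod, Measure.restrict_apply (measurableSet_gridCube ℓ b.1),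
          Measure.restrict_apply (measurableSet_gridCube ℓ b.2)]
        rcases Prod.ext_iff.not.mp hne |> not_and_or.mp with h1 | h1
        · rw [Set.disjoint_iff_inter_eq_empty.mp (gridCube_disjoint hℓ h1),
            measure_empty, zero_mul]
        · rw [Set.disjoint_iff_inter_eq_empty.mp (gridCube_disjoint hℓ h1),
            measure_empty, mul_zero]
      rw [this, mul_zero]
  refine measure_mono_null ?_ hUnull
  intro p hp
  rw [Set.mem_compl_iff, Set.mem_setOf_eq] at hp
  push_neg at hp
  have hmem : (cubeIdx ℓ p.1, cubeIdx ℓ p.2) ∈ Bad := by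
    by_cases h0 : μ0 (gridCube ℓ (cubeIdx ℓ p.1)) = 0
    · exact Or.inl h0
    by_cases h1 : μ1 (gridCube ℓ (cubeIdx ℓ p.2)) = 0
    · exact Or.inr (Or.inl h1)
    · exact Or.inr (Or.inr (hp h0 h1))
  exact Set.mem_biUnion hmem ⟨mem_own_gridCube hℓ p.1, mem_own_gridCube hℓ p.2⟩

end Main

section Entropy

variable {d : ℕ} {ℓ : ℝ}

lemma ae_cube_pos (hℓ : 0 < ℓ) (μ : Measure (EuclideanSpace ℝ (Fin d))) :
    ∀ᵐ x ∂μ, μ (gridCube ℓ (cubeIdx ℓ x)) ≠ 0 := by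
  have hnull : μ (⋃ q ∈ {q : Fin d → ℤ | μ (gridCube ℓ q) = 0}, gridCube ℓ q) = 0 :=
    (measure_biUnion_null_iff (Set.to_countable _)).mpr fun q hq => hq
  refine measure_mono_null (fun x hx => ?_) hnull
  rw [Set.mem_compl_iff, Set.mem_setOf_eq, not_not] at hx
  exact Set.mem_biUnion hx (mem_own_gridCube hℓ x)

lemma entropy_integral (hℓ : 0 < ℓ) (μ : Measure (EuclideanSpace ℝ (Fin d)))
    [IsProbabilityMeasure μ] (hc : ∃ K, IsCompact K ∧ μ Kᶜ = 0) :
    Integrable (fun x => -Real.log (μ (gridCube ℓ (cubeIdx ℓ x))).toReal) μ ∧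
    ∫ x, -Real.log (μ (gridCube ℓ (cubeIdx ℓ x))).toReal ∂μ
      = ∑' q : Fin d → ℤ, -((μ (gridCube ℓ q)).toReal * Real.log (μ (gridCube ℓ q)).toReal) := by
  classical
  set g : (Fin d → ℤ) → ℝ := fun q => -Real.log (μ (gridCube ℓ q)).toReal with hg
  set S : Finset (Fin d → ℤ) := (finite_pos_cubes hℓ μ hc).toFinset with hS
  have hSmem : ∀ q, q ∈ S ↔ μ (gridCube ℓ q) ≠ 0 := by
    intro q; rw [hS, Set.Finite.mem_toFinset]; rfl
  have hmeas : Measurable (fun x => g (cubeIdx ℓ x)) :=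
    (measurable_of_countable g).comp measurable_cubeIdx
  have h_ae : ∀ᵐ x ∂μ, cubeIdx ℓ x ∈ S := by
    filter_upwards [ae_cube_pos hℓ μ] with x hx
    exact (hSmem _).mpr hx
  -- integrability
  have hint : Integrable (fun x => g (cubeIdx ℓ x)) μ := by
    set T : Finset ℝ := insert (0:ℝ) (S.image fun q => ‖g q‖) with hT
    set C : ℝ := T.max' ⟨0, by rw [hT]; exact Finset.mem_insert_self _ _⟩ with hC
    refine Integrable.mono' (integrable_const C) hmeas.aestronglyMeasurable ?_
    filter_upwards [h_ae] with x hx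
    exact Finset.le_max' T _ (by rw [hT]; exact Finset.mem_insert_of_mem (Finset.mem_image_of_mem _ hx))
  refine ⟨hint, ?_⟩
  -- restrict to the union of positive cubes
  set U : Set (EuclideanSpace ℝ (Fin d)) := ⋃ q ∈ S, gridCube ℓ q with hU
  have hrestr : μ.restrict U = μ := by
    refine Measure.restrict_eq_self_of_ae_mem ?_
    filter_upwards [h_ae] with x hx
    exact Set.mem_biUnion hx (mem_own_gridCube hℓ x)
  have hintOn : ∀ q ∈ S, IntegrableOn (fun x => g (cubeIdx ℓ x)) (gridCube ℓ q) μ := by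
    intro q _
    rw [integrableOn_congr_fun (g := fun _ => g q)
      (fun x hx => by rw [(mem_gridCube_iff hℓ x q).mp hx]) (measurableSet_gridCube ℓ q)]
    exact integrableOn_const (measure_ne_top μ _)
  have key : ∫ x, g (cubeIdx ℓ x) ∂μ = ∑ q ∈ S, (μ (gridCube ℓ q)).toReal * g q := by
    conv_lhs => rw [← hrestr]
    rw [show ∫ x in U, g (cubeIdx ℓ x) ∂μ = ∑ q ∈ S, ∫ x in gridCube ℓ q, g (cubeIdx ℓ x) ∂μ from
      integral_biUnion_finset S (fun q _ => measurableSet_gridCube ℓ q)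
        ((gridCube_disjoint hℓ).set_pairwise _) hintOn]
    refine Finset.sum_congr rfl fun q _ => ?_
    rw [setIntegral_congr_fun (measurableSet_gridCube ℓ q)
      (fun x hx => by rw [(mem_gridCube_iff hℓ x q).mp hx]), setIntegral_const, smul_eq_mul, measureReal_def]
  rw [key, tsum_eq_sum (s := S) (fun q hq => by
    have : μ (gridCube ℓ q) = 0 := by
      by_contra h
      exact hq ((hSmem q).mpr h)
    simp [this])]
  refine Finset.sum_congr rfl fun q _ => ?_
  rw [hg]; ring

end Entropy


/-- The KL divergence of the block approximation with respect to `μ0 ⊗ μ1` is bounded by the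
sum of the Shannon entropies of the discretized marginals. -/
theorem blockApprox_klDiv_le_entropy {d0 d1 : ℕ}
    (μ0 : Measure (EuclideanSpace ℝ (Fin d0))) (μ1 : Measure (EuclideanSpace ℝ (Fin d1)))
    [IsProbabilityMeasure μ0] [IsProbabilityMeasure μ1]
    (hc0 : ∃ K : Set (EuclideanSpace ℝ (Fin d0)), IsCompact K ∧ μ0 Kᶜ = 0)
    (hc1 : ∃ K : Set (EuclideanSpace ℝ (Fin d1)), IsCompact K ∧ μ1 Kᶜ = 0)
    (π : Measure (EuclideanSpace ℝ (Fin d0) × EuclideanSpace ℝ (Fin d1)))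
    [IsProbabilityMeasure π]
    (hπ0 : π.map Prod.fst = μ0) (hπ1 : π.map Prod.snd = μ1)
    (ℓ : ℝ) (hℓ : 0 < ℓ) :
    klDiv (blockApprox μ0 μ1 π ℓ) (μ0.prod μ1)
      ≤ ENNReal.ofReal
        ((∑' q : Fin d0 → ℤ,
            -((μ0 (gridCube ℓ q)).toReal * Real.log (μ0 (gridCube ℓ q)).toReal))
          + ∑' q' : Fin d1 → ℤ,
            -((μ1 (gridCube ℓ q')).toReal * Real.log (μ1 (gridCube ℓ q')).toReal)) := by
  classical
  set ν := μ0.prod μ1 with hν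
  set Pl := blockApprox μ0 μ1 π ℓ with hPl
  have hmapf := map_fst_blockApprox μ0 μ1 π ℓ hπ0 hπ1 hℓ
  have hmaps := map_snd_blockApprox μ0 μ1 π ℓ hπ0 hπ1 hℓ
  have hac : Pl ≪ ν := by
    rw [hPl, blockApprox_eq_withDensity]
    exact withDensity_absolutelyContinuous _ _
  haveI hprob : IsProbabilityMeasure Pl := by
    constructor
    calc Pl Set.univ = (Pl.map Prod.fst) Set.univ := by
          rw [Measure.map_apply measurable_fst MeasurableSet.univ, Set.preimage_univ]
      _ = 1 := by rw [hmapf]; exact measure_univ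
  have hrn : Pl.rnDeriv ν =ᵐ[Pl] bDens μ0 μ1 π ℓ := by
    have h1 : Pl.rnDeriv ν =ᵐ[ν] bDens μ0 μ1 π ℓ := by
      rw [hPl, blockApprox_eq_withDensity]
      exact Measure.rnDeriv_withDensity ν (measurable_bDens μ0 μ1 π ℓ)
    exact h1.filter_mono hac.ae_le
  have hllr : ∀ᵐ p ∂Pl, llr Pl ν p
      = Real.log (bCoef μ0 μ1 π ℓ (cubeIdx ℓ p.1, cubeIdx ℓ p.2)).toReal := by
    filter_upwards [hrn] with p hp
    rw [llr_def]
    dsimp only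
    rw [hp, bDens_apply μ0 μ1 π ℓ hℓ p]
  have hgood := ae_good μ0 μ1 π ℓ hℓ
  obtain ⟨hint0, heq0⟩ := entropy_integral hℓ μ0 hc0
  obtain ⟨hint1, heq1⟩ := entropy_integral hℓ μ1 hc1
  have hmeas0 : Measurable (fun x : EuclideanSpace ℝ (Fin d0) =>
      -Real.log (μ0 (gridCube ℓ (cubeIdx ℓ x))).toReal) :=
    (measurable_of_countable (fun q => -Real.log (μ0 (gridCube ℓ q)).toReal)).comp
      measurable_cubeIdx
  have hmeas1 : Measurable (fun x : EuclideanSpace ℝ (Fin d1) =>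
      -Real.log (μ1 (gridCube ℓ (cubeIdx ℓ x))).toReal) :=
    (measurable_of_countable (fun q => -Real.log (μ1 (gridCube ℓ q)).toReal)).comp
      measurable_cubeIdx
  have hintG0 : Integrable (fun p : EuclideanSpace ℝ (Fin d0) × EuclideanSpace ℝ (Fin d1) =>
      -Real.log (μ0 (gridCube ℓ (cubeIdx ℓ p.1))).toReal) Pl :=
    (integrable_map_measure hmeas0.aestronglyMeasurable measurable_fst.aemeasurable).mp
      (by rw [hmapf]; exact hint0)
  have hintG1 : Integrable (fun p : EuclideanSpace ℝ (Fin d0) × EuclideanSpace ℝ (Fin d1) =>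
      -Real.log (μ1 (gridCube ℓ (cubeIdx ℓ p.2))).toReal) Pl :=
    (integrable_map_measure hmeas1.aestronglyMeasurable measurable_snd.aemeasurable).mp
      (by rw [hmaps]; exact hint1)
  have hIG0 : ∫ p, -Real.log (μ0 (gridCube ℓ (cubeIdx ℓ p.1))).toReal ∂Pl
      = ∑' q : Fin d0 → ℤ,
        -((μ0 (gridCube ℓ q)).toReal * Real.log (μ0 (gridCube ℓ q)).toReal) := by
    rw [show ∫ p, -Real.log (μ0 (gridCube ℓ (cubeIdx ℓ p.1))).toReal ∂Pl
        = ∫ x, -Real.log (μ0 (gridCube ℓ (cubeIdx ℓ x))).toReal ∂(Pl.map Prod.fst) from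
      (integral_map measurable_fst.aemeasurable hmeas0.aestronglyMeasurable).symm, hmapf, heq0]
  have hIG1 : ∫ p, -Real.log (μ1 (gridCube ℓ (cubeIdx ℓ p.2))).toReal ∂Pl
      = ∑' q : Fin d1 → ℤ,
        -((μ1 (gridCube ℓ q)).toReal * Real.log (μ1 (gridCube ℓ q)).toReal) := by
    rw [show ∫ p, -Real.log (μ1 (gridCube ℓ (cubeIdx ℓ p.2))).toReal ∂Pl
        = ∫ x, -Real.log (μ1 (gridCube ℓ (cubeIdx ℓ x))).toReal ∂(Pl.map Prod.snd) from
      (integral_map measurable_snd.aemeasurable hmeas1.aestronglyMeasurable).symm, hmaps, heq1]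
  -- integrability of llr
  have hll_int : Integrable (llr Pl ν) Pl := by
    set S0 : Finset (Fin d0 → ℤ) := (finite_pos_cubes hℓ μ0 hc0).toFinset with hS0
    set S1 : Finset (Fin d1 → ℤ) := (finite_pos_cubes hℓ μ1 hc1).toFinset with hS1
    set T : Finset ℝ := insert (0:ℝ)
      ((S0 ×ˢ S1).image fun qq => ‖Real.log (bCoef μ0 μ1 π ℓ qq).toReal‖) with hT
    set C : ℝ := T.max' ⟨0, by rw [hT]; exact Finset.mem_insert_self _ _⟩ with hC
    refine Integrable.mono' (integrable_const C) (measurable_llr _ _).aestronglyMeasurable ?_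
    filter_upwards [hllr, hgood] with p hp hg
    rw [hp]
    refine Finset.le_max' T _ ?_
    rw [hT]
    refine Finset.mem_insert_of_mem (Finset.mem_image_of_mem _ ?_)
    rw [Finset.mem_product]
    exact ⟨(Set.Finite.mem_toFinset _).mpr hg.1, (Set.Finite.mem_toFinset _).mpr hg.2.1⟩
  -- pointwise bound
  have hbound : llr Pl ν ≤ᵐ[Pl] fun p => -Real.log (μ0 (gridCube ℓ (cubeIdx ℓ p.1))).toReal
      + -Real.log (μ1 (gridCube ℓ (cubeIdx ℓ p.2))).toReal := by
    filter_upwards [hllr, hgood] with p hp hg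
    obtain ⟨h0, h1, h2⟩ := hg
    rw [hp, bCoef]
    dsimp only
    have ha' : (μ0 (gridCube ℓ (cubeIdx ℓ p.1))).toReal ≠ 0 :=
      ENNReal.toReal_ne_zero.mpr ⟨h0, measure_ne_top _ _⟩
    have hb' : (μ1 (gridCube ℓ (cubeIdx ℓ p.2))).toReal ≠ 0 :=
      ENNReal.toReal_ne_zero.mpr ⟨h1, measure_ne_top _ _⟩
    have hpv' : (π (gridCube ℓ (cubeIdx ℓ p.1) ×ˢ gridCube ℓ (cubeIdx ℓ p.2))).toReal ≠ 0 :=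
      ENNReal.toReal_ne_zero.mpr ⟨h2, measure_ne_top _ _⟩
    rw [ENNReal.toReal_div, ENNReal.toReal_mul,
      Real.log_div hpv' (mul_ne_zero ha' hb'), Real.log_mul ha' hb']
    have hle1 : (π (gridCube ℓ (cubeIdx ℓ p.1) ×ˢ gridCube ℓ (cubeIdx ℓ p.2))).toReal ≤ 1 := by
      have := ENNReal.toReal_mono ENNReal.one_ne_top (prob_le_one
        (μ := π) (s := gridCube ℓ (cubeIdx ℓ p.1) ×ˢ gridCube ℓ (cubeIdx ℓ p.2)))
      simpa using this
    have hlog : Real.log (π (gridCube ℓ (cubeIdx ℓ p.1) ×ˢ gridCube ℓ (cubeIdx ℓ p.2))).toReal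
        ≤ 0 := Real.log_nonpos ENNReal.toReal_nonneg hle1
    linarith
  -- conclusion
  rw [klDiv]
  rw [if_pos ⟨hac, hll_int⟩]
  apply ENNReal.ofReal_le_ofReal
  calc ∫ p, llr Pl ν p ∂Pl
      ≤ ∫ p, (-Real.log (μ0 (gridCube ℓ (cubeIdx ℓ p.1))).toReal
          + -Real.log (μ1 (gridCube ℓ (cubeIdx ℓ p.2))).toReal) ∂Pl :=
        integral_mono_ae hll_int (hintG0.add hintG1) hbound
    _ = (∫ p, -Real.log (μ0 (gridCube ℓ (cubeIdx ℓ p.1))).toReal ∂Pl)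
        + ∫ p, -Real.log (μ1 (gridCube ℓ (cubeIdx ℓ p.2))).toReal ∂Pl :=
        integral_add hintG0 hintG1
    _ = _ := by rw [hIG0, hIG1]
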